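/- (Local stability of bounded KKT multipliers at a point where the multiplier is unique.) Let x̄ ∈ ℝ^n, r̄ ∈ ℝ^J, and suppose M(x̄, r̄) = {λ̄} is a singleton. Let Λ ⊆ ℝ^J be a bounded set. Then for every ε₁ > 0 there exists ε₂ > 0 such that for every (x, r) ∈ ℝ^n × ℝ^J with ‖(x,r) − (x̄,r̄)‖ ≤ ε₂ and every λ ∈ Λ ∩ M(x,r), one has ‖λ − λ̄‖ ≤ ε₁. -/
import Mathlib


open scoped InnerProductSpace
open Filter Topology

noncomputable section

/-- Euclidean space `ℝ^m`. -/
abbrev Eu (m : ℕ) : Type := EuclideanSpace ℝ (Fin m)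

/-- Subgradient set (in the sense of convex analysis) of `f` at `x`. -/
def Subgrad {E : Type*} [NormedAddCommGroup E] [InnerProductSpace ℝ E]
    (f : E → ℝ) (x : E) : Set E :=
  {g | ∀ y, f x + ⟪g, y - x⟫_ℝ ≤ f y}

/-- Feasible region `F(r) = {x : P_i(x) ≤ r_i, i = 1,…,J}`. -/
def Feas {n J : ℕ} (P : Fin J → Eu n → ℝ) (r : Eu J) : Set (Eu n) :=
  {x | ∀ i, P i x ≤ r i}

/-- `S_p(λ)`: global minimizers of `x' ↦ l(x') + Σ_i λ_i P_i(x')`. -/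
def Sp {n J : ℕ} (l : Eu n → ℝ) (P : Fin J → Eu n → ℝ) (lam : Eu J) : Set (Eu n) :=
  {x | ∀ x', l x + ∑ i, lam i * P i x ≤ l x' + ∑ i, lam i * P i x'}

/-- `S_c(r)`: global minimizers of `l` over `F(r)`. -/
def Sc {n J : ℕ} (l : Eu n → ℝ) (P : Fin J → Eu n → ℝ) (r : Eu J) : Set (Eu n) :=
  {x | x ∈ Feas P r ∧ ∀ x' ∈ Feas P r, l x ≤ l x'}

/-- The multiplier set `M(x,r)`. -/
def Mset {n J : ℕ} (l : Eu n → ℝ) (P : Fin J → Eu n → ℝ) (x : Eu n) (r : Eu J) :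
    Set (Eu J) :=
  {lam | (∀ i, 0 ≤ lam i) ∧
    (∃ u ∈ Subgrad l x, ∃ v : Fin J → Eu n,
      (∀ i, v i ∈ Subgrad (P i) x) ∧ u + ∑ i, lam i • v i = 0) ∧
    (∀ i, lam i * (P i x - r i) = 0)}

/-- Local boundedness of subgradients of a continuous function. -/
lemma subgrad_bound {n : ℕ} (f : Eu n → ℝ) (hf : Continuous f) (xb : Eu n) :
    ∃ C : ℝ, 0 ≤ C ∧ ∀ x : Eu n, ‖x - xb‖ ≤ 1 → ∀ g ∈ Subgrad f x, ‖g‖ ≤ C := by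
  have hcpt : IsCompact (Metric.closedBall xb 2) := isCompact_closedBall xb 2
  have hne : (Metric.closedBall xb 2).Nonempty := ⟨xb, by simp⟩
  obtain ⟨p, hp, hmax⟩ := hcpt.exists_isMaxOn hne hf.continuousOn
  obtain ⟨q, hq, hmin⟩ := hcpt.exists_isMinOn hne hf.continuousOn
  have hqp : f q ≤ f p := hmin hp
  refine ⟨f p - f q, by linarith, ?_⟩
  intro x hx g hg
  rcases eq_or_ne g 0 with h0 | h0
  · simp only [h0, norm_zero]; linarith
  · have hgn : ‖g‖ ≠ 0 := norm_ne_zero_iff.2 h0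
    set y := x + ‖g‖⁻¹ • g with hy
    have hxB : x ∈ Metric.closedBall xb 2 := by
      rw [Metric.mem_closedBall, dist_eq_norm]; linarith
    have hn1 : ‖‖g‖⁻¹ • g‖ = 1 := by
      rw [norm_smul, norm_inv, norm_norm, inv_mul_cancel₀ hgn]
    have hyB : y ∈ Metric.closedBall xb 2 := by
      rw [Metric.mem_closedBall, dist_eq_norm]
      have h1 : y - xb = (x - xb) + ‖g‖⁻¹ • g := by rw [hy]; abel
      calc ‖y - xb‖ ≤ ‖x - xb‖ + ‖‖g‖⁻¹ • g‖ := by rw [h1]; exact norm_add_le _ _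
        _ ≤ 2 := by rw [hn1]; linarith
    have hsub := hg y
    have hip : ⟪g, y - x⟫_ℝ = ‖g‖ := by
      have h2 : y - x = ‖g‖⁻¹ • g := by rw [hy]; abel
      rw [h2, real_inner_smul_right, real_inner_self_eq_norm_mul_norm]
      field_simp
    rw [hip] at hsub
    have h3 : f y ≤ f p := hmax hyB
    have h4 : f q ≤ f x := hmin hxB
    linarith

theorem stmt13 {n J : ℕ} (hn : 1 ≤ n) (hJ : 1 ≤ J)
    (l : Eu n → ℝ) (P : Fin J → Eu n → ℝ)
    (hlcv : ConvexOn ℝ Set.univ l) (hlc : Continuous l)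
    (hPcv : ∀ i, ConvexOn ℝ Set.univ (P i)) (hPc : ∀ i, Continuous (P i))
    (hPnn : ∀ i x, 0 ≤ P i x)
    (xb : Eu n) (rb : Eu J) (lamb : Eu J)
    (hsingle : Mset l P xb rb = {lamb})
    (Λ : Set (Eu J)) (hΛ : Bornology.IsBounded Λ) :
    ∀ ε₁ > (0 : ℝ), ∃ ε₂ > (0 : ℝ), ∀ (x : Eu n) (r : Eu J),
      Real.sqrt (‖x - xb‖ ^ 2 + ‖r - rb‖ ^ 2) ≤ ε₂ →
      ∀ lam ∈ Λ ∩ Mset l P x r, ‖lam - lamb‖ ≤ ε₁ := by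
  intro ε₁ hε₁
  by_contra hcon
  push_neg at hcon
  have H : ∀ k : ℕ, ∃ (x : Eu n) (r : Eu J) (lam : Eu J),
      Real.sqrt (‖x - xb‖ ^ 2 + ‖r - rb‖ ^ 2) ≤ 1 / (k + 1) ∧
      lam ∈ Λ ∧ lam ∈ Mset l P x r ∧ ε₁ < ‖lam - lamb‖ := by
    intro k
    obtain ⟨x, r, hxr, lam, hlam, hgt⟩ := hcon (1 / (k + 1)) (by positivity)
    exact ⟨x, r, lam, hxr, hlam.1, hlam.2, hgt⟩
  choose x r lam hxr hΛmem hM hgt using H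
  have h2 : ∀ k, ∃ u ∈ Subgrad l (x k), ∃ v : Fin J → Eu n,
      (∀ i, v i ∈ Subgrad (P i) (x k)) ∧ u + ∑ i, lam k i • v i = 0 :=
    fun k => (hM k).2.1
  choose u hu v hv heq using h2
  -- basic bounds on components of (x k, r k)
  have hxle : ∀ k : ℕ, ‖x k - xb‖ ≤ 1 / (k + 1) := by
    intro k
    calc ‖x k - xb‖ = Real.sqrt (‖x k - xb‖ ^ 2) := (Real.sqrt_sq (norm_nonneg _)).symm
      _ ≤ Real.sqrt (‖x k - xb‖ ^ 2 + ‖r k - rb‖ ^ 2) :=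
          Real.sqrt_le_sqrt (le_add_of_nonneg_right (by positivity))
      _ ≤ 1 / (k + 1) := hxr k
  have hrle : ∀ k : ℕ, ‖r k - rb‖ ≤ 1 / (k + 1) := by
    intro k
    calc ‖r k - rb‖ = Real.sqrt (‖r k - rb‖ ^ 2) := (Real.sqrt_sq (norm_nonneg _)).symm
      _ ≤ Real.sqrt (‖x k - xb‖ ^ 2 + ‖r k - rb‖ ^ 2) :=
          Real.sqrt_le_sqrt (le_add_of_nonneg_left (by positivity))
      _ ≤ 1 / (k + 1) := hxr k
  have hone : ∀ k : ℕ, (1 : ℝ) / (k + 1) ≤ 1 := by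
    intro k
    rw [div_le_one (by positivity)]
    exact le_add_of_nonneg_left (Nat.cast_nonneg k)
  have hx1 : ∀ k, ‖x k - xb‖ ≤ 1 := fun k => (hxle k).trans (hone k)
  have hxt : Tendsto x atTop (𝓝 xb) := by
    rw [tendsto_iff_norm_sub_tendsto_zero]
    exact squeeze_zero (fun k => norm_nonneg _) hxle tendsto_one_div_add_atTop_nhds_zero_nat
  have hrt : Tendsto r atTop (𝓝 rb) := by
    rw [tendsto_iff_norm_sub_tendsto_zero]
    exact squeeze_zero (fun k => norm_nonneg _) hrle tendsto_one_div_add_atTop_nhds_zero_nat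
  -- uniform bounds on (lam, u, v)
  obtain ⟨CΛ, hCΛ⟩ := isBounded_iff_forall_norm_le.1 hΛ
  obtain ⟨Cl, hCl0, hClb⟩ := subgrad_bound l hlc xb
  obtain ⟨CP, hCP0, hCPb⟩ : ∃ C : ℝ, 0 ≤ C ∧ ∀ i, ∀ z : Eu n, ‖z - xb‖ ≤ 1 →
      ∀ g ∈ Subgrad (P i) z, ‖g‖ ≤ C := by
    choose C hC0 hCb using fun i => subgrad_bound (P i) (hPc i) xb
    refine ⟨∑ i, C i, Finset.sum_nonneg (fun i _ => hC0 i), fun i z hz g hg =>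
      (hCb i z hz g hg).trans ?_⟩
    exact Finset.single_le_sum (fun j _ => hC0 j) (Finset.mem_univ i)
  set R : ℝ := max CΛ (max Cl CP) with hR
  set w : ℕ → Eu J × Eu n × (Fin J → Eu n) := fun k => (lam k, u k, v k) with hw
  have hwball : ∀ k, w k ∈ Metric.closedBall (0 : Eu J × Eu n × (Fin J → Eu n)) R := by
    intro k
    rw [Metric.mem_closedBall, dist_zero_right, Prod.norm_def, Prod.norm_def]
    refine max_le_max (hCΛ _ (hΛmem k)) (max_le_max (hClb _ (hx1 k) _ (hu k)) ?_)
    exact (pi_norm_le_iff_of_nonneg hCP0).2 fun i => hCPb i _ (hx1 k) _ (hv k i)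
  obtain ⟨a, -, φ, hφ, hwt⟩ := tendsto_subseq_of_bounded Metric.isBounded_closedBall hwball
  -- component limits
  have hxφ : Tendsto (fun k => x (φ k)) atTop (𝓝 xb) := hxt.comp hφ.tendsto_atTop
  have hrφ : Tendsto (fun k => r (φ k)) atTop (𝓝 rb) := hrt.comp hφ.tendsto_atTop
  have hlamt : Tendsto (fun k => lam (φ k)) atTop (𝓝 a.1) :=
    (continuous_fst.tendsto a).comp hwt
  have hut : Tendsto (fun k => u (φ k)) atTop (𝓝 a.2.1) :=
    ((continuous_fst.comp continuous_snd).tendsto a).comp hwt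
  have hvt : ∀ i, Tendsto (fun k => v (φ k) i) atTop (𝓝 (a.2.2 i)) := fun i =>
    (((continuous_apply i).comp (continuous_snd.comp continuous_snd)).tendsto a).comp hwt
  have hlami : ∀ i : Fin J, Tendsto (fun k => lam (φ k) i) atTop (𝓝 (a.1 i)) := fun i =>
    ((EuclideanSpace.proj (𝕜 := ℝ) i).continuous.tendsto a.1).comp hlamt
  have hri : ∀ i : Fin J, Tendsto (fun k => r (φ k) i) atTop (𝓝 (rb i)) := fun i =>
    ((EuclideanSpace.proj (𝕜 := ℝ) i).continuous.tendsto rb).comp hrφ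
  -- the limit multiplier belongs to Mset l P xb rb
  have hmem : a.1 ∈ Mset l P xb rb := by
    refine ⟨?_, ⟨a.2.1, ?_, a.2.2, ?_, ?_⟩, ?_⟩
    · intro i
      exact ge_of_tendsto' (hlami i) (fun k => (hM (φ k)).1 i)
    · intro y
      have hk : ∀ k, l (x (φ k)) + ⟪u (φ k), y - x (φ k)⟫_ℝ ≤ l y := fun k => hu (φ k) y
      have ht : Tendsto (fun k => l (x (φ k)) + ⟪u (φ k), y - x (φ k)⟫_ℝ) atTop
          (𝓝 (l xb + ⟪a.2.1, y - xb⟫_ℝ)) :=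
        ((hlc.tendsto xb).comp hxφ).add (hut.inner (tendsto_const_nhds.sub hxφ))
      exact le_of_tendsto ht (Filter.Eventually.of_forall hk)
    · intro i y
      have hk : ∀ k, P i (x (φ k)) + ⟪v (φ k) i, y - x (φ k)⟫_ℝ ≤ P i y :=
        fun k => hv (φ k) i y
      have ht : Tendsto (fun k => P i (x (φ k)) + ⟪v (φ k) i, y - x (φ k)⟫_ℝ) atTop
          (𝓝 (P i xb + ⟪a.2.2 i, y - xb⟫_ℝ)) :=
        (((hPc i).tendsto xb).comp hxφ).add ((hvt i).inner (tendsto_const_nhds.sub hxφ))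
      exact le_of_tendsto ht (Filter.Eventually.of_forall hk)
    · have ht : Tendsto (fun k => u (φ k) + ∑ i, lam (φ k) i • v (φ k) i) atTop
          (𝓝 (a.2.1 + ∑ i, a.1 i • a.2.2 i)) :=
        hut.add (tendsto_finset_sum _ fun i _ => (hlami i).smul (hvt i))
      have h0 : (fun k => u (φ k) + ∑ i, lam (φ k) i • v (φ k) i) = fun _ => (0 : Eu n) :=
        funext fun k => heq (φ k)
      rw [h0] at ht
      exact tendsto_nhds_unique ht tendsto_const_nhds
    · intro i
      have ht : Tendsto (fun k => lam (φ k) i * (P i (x (φ k)) - r (φ k) i)) atTop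
          (𝓝 (a.1 i * (P i xb - rb i))) :=
        (hlami i).mul ((((hPc i).tendsto xb).comp hxφ).sub (hri i))
      have h0 : (fun k => lam (φ k) i * (P i (x (φ k)) - r (φ k) i)) = fun _ => (0 : ℝ) :=
        funext fun k => (hM (φ k)).2.2 i
      rw [h0] at ht
      exact tendsto_nhds_unique ht tendsto_const_nhds
  have heq1 : a.1 = lamb := by
    have := hmem
    rw [hsingle] at this
    exact this
  have hge : ε₁ ≤ ‖a.1 - lamb‖ := by
    have ht : Tendsto (fun k => ‖lam (φ k) - lamb‖) atTop (𝓝 ‖a.1 - lamb‖) :=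
      (hlamt.sub tendsto_const_nhds).norm
    exact ge_of_tendsto' ht (fun k => (hgt (φ k)).le)
  rw [heq1, sub_self, norm_zero] at hge
  linarith
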